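/- Let V be a finite type, let E be a finite set of ordered pairs (j,k) of distinct elements of V (the edges of a graph, each listed once), and let Φ : V → ℝ. Define g₂ : ℝ → ℝ by g₂(x) = ∫ t in 0..x, (2·Real.arctan (Real.exp t) − π/2) and S : (V → ℝ) → ℝ by S(ρ) = ∑_{(j,k) ∈ E} (g₂(ρ j − ρ k) − (π/2)·(ρ j + ρ k)) + ∑_{j ∈ V} Φ j · ρ j. Then S is differentiable, and ρ is a critical point of S (fderiv ℝ S ρ = 0) if and only if for every vertex j the circle-pattern equation holds: 2 · ∑_{k neighboring j} Real.arctan (Real.exp (ρ k − ρ j)) = Φ j, where the sum extends over all k with (j,k) ∈ E or (k,j) ∈ E. -/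

import Mathlib

open Real

/-- `g₂ x = ∫ t in 0..x, (2 arctan (exp t) − π/2)`. -/
noncomputable def circlePatternG₂ (x : ℝ) : ℝ :=
  ∫ t in (0 : ℝ)..x, (2 * arctan (exp t) - π / 2)

namespace CirclePatternAux

noncomputable def f (x : ℝ) : ℝ := 2 * arctan (exp x) - π / 2

lemma f_cont : Continuous f := by
  unfold f
  exact (continuous_const.mul (Real.continuous_arctan.comp Real.continuous_exp)).sub
    continuous_const

lemma hasDerivAt_g₂ (x : ℝ) : HasDerivAt circlePatternG₂ (f x) x :=
  intervalIntegral.integral_hasDerivAt_right (f_cont.intervalIntegrable 0 x)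
    (f_cont.stronglyMeasurableAtFilter _ _) f_cont.continuousAt

lemma f_sub (x : ℝ) : f x - π / 2 = -(2 * arctan (exp (-x))) := by
  have h : arctan (exp x)⁻¹ = π / 2 - arctan (exp x) :=
    Real.arctan_inv_of_pos (exp_pos x)
  rw [Real.exp_neg, h]; unfold f; ring

variable {V : Type*} [Fintype V] [DecidableEq V]

noncomputable def P (a : V) : (V → ℝ) →L[ℝ] ℝ := ContinuousLinearMap.proj a

noncomputable def L (E : Finset (V × V)) (Φ : V → ℝ) (ρ : V → ℝ) : (V → ℝ) →L[ℝ] ℝ :=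
  (∑ e ∈ E, ((f (ρ e.1 - ρ e.2)) • (P e.1 - P e.2) - (π/2) • (P e.1 + P e.2))) +
    ∑ j : V, Φ j • P j

lemma hasFDerivAt (E : Finset (V × V)) (Φ : V → ℝ) (ρ : V → ℝ) :
    HasFDerivAt (fun ρ : V → ℝ =>
      ∑ e ∈ E, (circlePatternG₂ (ρ e.1 - ρ e.2) - (π / 2) * (ρ e.1 + ρ e.2)) +
        ∑ j : V, Φ j * ρ j) (L E Φ ρ) ρ := by
  apply HasFDerivAt.add
  · apply HasFDerivAt.fun_sum
    intro e _
    apply HasFDerivAt.sub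
    · have h1 : HasFDerivAt (fun ρ : V → ℝ => ρ e.1 - ρ e.2) (P e.1 - P e.2) ρ :=
        (P e.1 - P e.2).hasFDerivAt
      exact (hasDerivAt_g₂ (ρ e.1 - ρ e.2)).comp_hasFDerivAt ρ h1
    · have h1 : HasFDerivAt (fun ρ : V → ℝ => ρ e.1 + ρ e.2) (P e.1 + P e.2) ρ :=
        (P e.1 + P e.2).hasFDerivAt
      exact h1.const_mul (π/2)
  · apply HasFDerivAt.fun_sum
    intro j _
    have h1 : HasFDerivAt (fun ρ : V → ℝ => ρ j) (P j) ρ := (P j).hasFDerivAt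
    exact h1.const_mul (Φ j)

lemma L_apply (E : Finset (V × V)) (hE : ∀ e ∈ E, e.1 ≠ e.2)
    (hE' : ∀ e ∈ E, Prod.swap e ∉ E) (Φ : V → ℝ) (ρ : V → ℝ) (j : V) :
    L E Φ ρ (Pi.single j 1) =
      Φ j - 2 * ∑ k ∈ Finset.univ.filter (fun k => (j, k) ∈ E ∨ (k, j) ∈ E),
        arctan (exp (ρ k - ρ j)) := by
  classical
  have hsingle : ∀ a : V, (Pi.single j (1:ℝ) : V → ℝ) a = if a = j then 1 else 0 := by
    intro a; simp [Pi.single_apply]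
  have hΦ : (∑ i : V, Φ i • P i) (Pi.single j (1:ℝ)) = Φ j := by
    simp only [ContinuousLinearMap.sum_apply, ContinuousLinearMap.smul_apply]
    have : ∀ i : V, Φ i • P i (Pi.single j (1:ℝ)) = if i = j then Φ i else 0 := by
      intro i
      simp [P, ContinuousLinearMap.proj_apply, hsingle i]
    simp only [this, Finset.sum_ite_eq' Finset.univ j Φ, Finset.mem_univ, if_true]
  have hsum : (∑ e ∈ E, ((f (ρ e.1 - ρ e.2)) • (P e.1 - P e.2)
        - (π/2) • (P e.1 + P e.2))) (Pi.single j (1:ℝ)) =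
      - 2 * ∑ k ∈ Finset.univ.filter (fun k => (j, k) ∈ E ∨ (k, j) ∈ E),
        arctan (exp (ρ k - ρ j)) := by
    rw [ContinuousLinearMap.sum_apply]
    have hterm : ∀ e ∈ E, ((f (ρ e.1 - ρ e.2)) • (P e.1 - P e.2)
          - (π/2) • (P e.1 + P e.2)) (Pi.single j (1:ℝ)) =
        if e.1 = j then -(2 * arctan (exp (ρ e.2 - ρ j)))
        else if e.2 = j then -(2 * arctan (exp (ρ e.1 - ρ j))) else 0 := by
      intro e he
      simp only [ContinuousLinearMap.sub_apply, ContinuousLinearMap.smul_apply,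
        ContinuousLinearMap.add_apply, P, ContinuousLinearMap.proj_apply,
        hsingle, smul_eq_mul]
      by_cases h1 : e.1 = j
      · have h2 : e.2 ≠ j := by
          intro h2; exact hE e he (h1.trans h2.symm)
        simp only [h1, h2, if_true, if_false]
        have := f_sub (ρ j - ρ e.2)
        rw [show -(ρ j - ρ e.2) = ρ e.2 - ρ j by ring] at this
        norm_num
        linarith [this]
      · by_cases h2 : e.2 = j
        · simp only [h1, h2, if_true, if_false]
          have : f (ρ e.1 - ρ j) = 2 * arctan (exp (ρ e.1 - ρ j)) - π/2 := rfl
          norm_num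
          linarith [this]
        · simp [h1, h2]
    rw [Finset.sum_congr rfl hterm]
    rw [← Finset.sum_filter_of_ne (p := fun e => e.1 = j ∨ e.2 = j)
      (by intro e _ hne; by_contra hor; push_neg at hor
          simp [hor.1, hor.2] at hne)]
    rw [Finset.mul_sum, Finset.sum_nbij' (i := fun e : V × V => if e.1 = j then e.2 else e.1)
      (j := fun k : V => if (j, k) ∈ E then (j, k) else (k, j))]
    · intro e he
      simp only [Finset.mem_filter] at he ⊢
      refine ⟨Finset.mem_univ _, ?_⟩
      rcases he.2 with h1 | h2
      · left; simp only [h1, if_true]; rw [show (j, e.2) = e from Prod.ext h1.symm rfl]; exact he.1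
      · have h1 : e.1 ≠ j := fun h => hE e he.1 (h.trans h2.symm)
        right; simp only [h1, if_false]
        rw [show (e.1, j) = e from Prod.ext rfl h2.symm]; exact he.1
    · intro k hk
      simp only [Finset.mem_filter, Finset.mem_univ, true_and] at hk ⊢
      by_cases h : (j, k) ∈ E
      · simp [h]
      · rcases hk with h1 | h2
        · exact absurd h1 h
        · simp [h, h2]
    · intro e he
      simp only [Finset.mem_filter] at he
      rcases he.2 with h1 | h2
      · simp only [h1, if_true]
        rw [if_pos (by rw [show (j, e.2) = e from Prod.ext h1.symm rfl]; exact he.1)]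
        exact Prod.ext h1.symm rfl
      · have h1 : e.1 ≠ j := fun h => hE e he.1 (h.trans h2.symm)
        simp only [h1, if_false]
        rw [if_neg (by
          intro hmem
          exact hE' e he.1 (by rw [show Prod.swap e = (e.2, e.1) from rfl, h2]
                               rw [show (j, e.1) = (j, e.1) from rfl] at hmem; exact hmem))]
        exact Prod.ext rfl h2.symm
    · intro k hk
      simp only [Finset.mem_filter, Finset.mem_univ, true_and] at hk
      by_cases h : (j, k) ∈ E
      · simp [h]
      · rcases hk with h1 | h2
        · exact absurd h1 h
        · have : k ≠ j := hE (k, j) h2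
          simp [h, this]
    · intro e he
      simp only [Finset.mem_filter] at he
      rcases he.2 with h1 | h2
      · simp only [h1, if_true]; ring
      · have h1 : e.1 ≠ j := fun h => hE e he.1 (h.trans h2.symm)
        simp only [h1, h2, if_false, if_true]; ring
  simp only [L, ContinuousLinearMap.add_apply, hΦ, hsum]
  ring

end CirclePatternAux

/-- The circle-pattern functional of Bobenko–Springborn is differentiable, and
its critical points are exactly the solutions of the circle-pattern equations
`2 ∑_k arctan (exp (ρ k − ρ j)) = Φ j`. -/
theorem circlePattern_functional_critical_points
    (V : Type*) [Fintype V] [DecidableEq V] (E : Finset (V × V))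
    (hE : ∀ e ∈ E, e.1 ≠ e.2) (hE' : ∀ e ∈ E, Prod.swap e ∉ E) (Φ : V → ℝ)
    (S : (V → ℝ) → ℝ)
    (hS : ∀ ρ : V → ℝ, S ρ =
      ∑ e ∈ E, (circlePatternG₂ (ρ e.1 - ρ e.2) - (π / 2) * (ρ e.1 + ρ e.2)) +
        ∑ j : V, Φ j * ρ j) :
    Differentiable ℝ S ∧
      ∀ ρ : V → ℝ, fderiv ℝ S ρ = 0 ↔
        ∀ j : V, 2 * ∑ k ∈ Finset.univ.filter (fun k => (j, k) ∈ E ∨ (k, j) ∈ E),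
            arctan (exp (ρ k - ρ j)) = Φ j := by
  classical
  have hSeq : S = fun ρ : V → ℝ =>
      ∑ e ∈ E, (circlePatternG₂ (ρ e.1 - ρ e.2) - (π / 2) * (ρ e.1 + ρ e.2)) +
        ∑ j : V, Φ j * ρ j := funext hS
  have hF : ∀ ρ : V → ℝ, HasFDerivAt S (CirclePatternAux.L E Φ ρ) ρ := by
    intro ρ; rw [hSeq]; exact CirclePatternAux.hasFDerivAt E Φ ρ
  refine ⟨fun ρ => (hF ρ).differentiableAt, fun ρ => ?_⟩
  rw [(hF ρ).fderiv]
  constructor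
  · intro h0 j
    have := congrArg (fun (T : (V → ℝ) →L[ℝ] ℝ) => T (Pi.single j 1)) h0
    simp only [ContinuousLinearMap.zero_apply] at this
    rw [CirclePatternAux.L_apply E hE hE' Φ ρ j] at this
    linarith
  · intro heq
    have hb : ∀ j : V, CirclePatternAux.L E Φ ρ (Pi.single j 1) = 0 := by
      intro j
      rw [CirclePatternAux.L_apply E hE hE' Φ ρ j, ← heq j]; ring
    ext x
    have hx : x = ∑ j : V, x j • (Pi.single j (1:ℝ) : V → ℝ) := by
      funext a
      simp [Pi.single_apply, Finset.sum_ite_eq]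
    rw [ContinuousLinearMap.zero_apply, hx]
    rw [map_sum]
    simp only [map_smul, hb, smul_zero, Finset.sum_const_zero]
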